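/- Let F, G_0, G_1 be real Hilbert spaces, let P_0 : F → G_0 and P_1 : F → G_1 be bounded linear maps, and let Λ_0 : F → ℝ^{m_0} and Λ_1 : F → ℝ^{m_1} be bounded linear maps. Suppose ker Λ_0 ⊆ ker P_1 or ker Λ_0 ⊆ ker Λ_1. Then the implication [P_0 f_0 = 0, P_1(f_0 − f_1) = 0, Λ_0 f_0 = 0 and Λ_1 f_1 = 0 together imply f_0 = 0 and f_1 = 0] holds if and only if both ker P_0 ∩ ker Λ_0 = {0} and ker P_1 ∩ ker Λ_1 = {0}. -/

import Mathlib

/-- In Hilbert spaces, assuming `ker Λ₀ ⊆ ker P₁` or `ker Λ₀ ⊆ ker Λ₁`,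
the joint-kernel condition holds iff `ker P₀ ∩ ker Λ₀ = {0}` and
`ker P₁ ∩ ker Λ₁ = {0}`. -/
theorem statement7
    {F G₀ G₁ : Type*}
    [NormedAddCommGroup F] [InnerProductSpace ℝ F] [CompleteSpace F]
    [NormedAddCommGroup G₀] [InnerProductSpace ℝ G₀] [CompleteSpace G₀]
    [NormedAddCommGroup G₁] [InnerProductSpace ℝ G₁] [CompleteSpace G₁]
    {m₀ m₁ : ℕ}
    (P₀ : F →L[ℝ] G₀) (P₁ : F →L[ℝ] G₁)
    (Λ₀ : F →L[ℝ] (Fin m₀ → ℝ)) (Λ₁ : F →L[ℝ] (Fin m₁ → ℝ))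
    (hker : LinearMap.ker (Λ₀ : F →ₗ[ℝ] (Fin m₀ → ℝ)) ≤ LinearMap.ker (P₁ : F →ₗ[ℝ] G₁) ∨
      LinearMap.ker (Λ₀ : F →ₗ[ℝ] (Fin m₀ → ℝ)) ≤ LinearMap.ker (Λ₁ : F →ₗ[ℝ] (Fin m₁ → ℝ))) :
    (∀ f₀ f₁ : F, P₀ f₀ = 0 → P₁ (f₀ - f₁) = 0 → Λ₀ f₀ = 0 → Λ₁ f₁ = 0 →
        f₀ = 0 ∧ f₁ = 0) ↔
      (LinearMap.ker (P₀ : F →ₗ[ℝ] G₀) ⊓ LinearMap.ker (Λ₀ : F →ₗ[ℝ] (Fin m₀ → ℝ)) = ⊥ ∧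
        LinearMap.ker (P₁ : F →ₗ[ℝ] G₁) ⊓ LinearMap.ker (Λ₁ : F →ₗ[ℝ] (Fin m₁ → ℝ)) = ⊥) := by
  constructor
  · intro h
    constructor
    · rw [Submodule.eq_bot_iff]
      rintro f ⟨hf0, hf1⟩
      rcases hker with hk | hk
      · exact (h f 0 hf0 (by simpa using hk hf1) hf1 (by simp)).1
      · exact (h f f hf0 (by simp) hf1 (hk hf1)).1
    · rw [Submodule.eq_bot_iff]
      rintro g ⟨hg0, hg1⟩
      have := (h 0 (-g) (by simp) (by simpa using hg0) (by simp) (by simpa using hg1)).2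
      simpa [neg_eq_zero] using this
  · rintro ⟨h0, h1⟩ f₀ f₁ hP0 hP1 hL0 hL1
    have hf0 : f₀ = 0 := by
      have : f₀ ∈ LinearMap.ker (P₀ : F →ₗ[ℝ] G₀) ⊓ LinearMap.ker (Λ₀ : F →ₗ[ℝ] (Fin m₀ → ℝ)) := ⟨hP0, hL0⟩
      simpa [h0] using this
    subst hf0
    have hP1' : P₁ f₁ = 0 := by
      have : P₁ (0 - f₁) = 0 := hP1
      simpa [neg_eq_zero] using this
    have : f₁ ∈ LinearMap.ker (P₁ : F →ₗ[ℝ] G₁) ⊓ LinearMap.ker (Λ₁ : F →ₗ[ℝ] (Fin m₁ → ℝ)) := ⟨hP1', hL1⟩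
    refine ⟨rfl, by simpa [h1] using this⟩
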